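/- Let u ∈ F_L be a Lagrangian frame in ℝ^{2L} (uᵀu = I, uᵀJu = 0), and let v_k, v_l ∈ ℂ^{2L} be orthonormal eigenvectors of J with the same eigenvalue iσ (σ = ±1) and v_k ≠ v_l. Then Σ_{q=1}^{L} ⟨v_k, u_q⟩⟨u_q, v_l⟩ = 0, where u_q denotes the q-th column of u. -/

import Mathlib

open Matrix Complex

/-- Vanishing of cross-channel sums over a Lagrangian frame: if `v_k ≠ v_l` are
orthonormal eigenvectors of `J` with the same eigenvalue `iσ`, then
`Σ_q ⟨v_k, u_q⟩⟨u_q, v_l⟩ = 0` for any Lagrangian frame `u`. -/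
theorem stmt12 (L : ℕ)
    (u : Matrix (Fin L ⊕ Fin L) (Fin L) ℝ)
    (hu_orth : uᵀ * u = 1)
    (hu_lag : uᵀ * Matrix.J (Fin L) ℝ * u = 0)
    (vk vl : (Fin L ⊕ Fin L) → ℂ)
    (σ : ℝ) (hσ : σ = 1 ∨ σ = -1)
    (hvk : (Matrix.J (Fin L) ℝ).map Complex.ofReal *ᵥ vk = (Complex.I * σ) • vk)
    (hvl : (Matrix.J (Fin L) ℝ).map Complex.ofReal *ᵥ vl = (Complex.I * σ) • vl)
    (hnk : star vk ⬝ᵥ vk = 1) (hnl : star vl ⬝ᵥ vl = 1)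
    (horth : star vk ⬝ᵥ vl = 0) (hne : vk ≠ vl) :
    ∑ q : Fin L,
        (star vk ⬝ᵥ fun i => (u i q : ℂ)) * ((fun i => ((u i q : ℝ) : ℂ)) ⬝ᵥ vl)
      = 0 := by
  set uc : Matrix (Fin L ⊕ Fin L) (Fin L) ℂ := u.map Complex.ofReal with huc
  set Jc : Matrix (Fin L ⊕ Fin L) (Fin L ⊕ Fin L) ℂ :=
    (Matrix.J (Fin L) ℝ).map Complex.ofReal with hJc
  have hmapmul : ∀ {m n p : Type} [Fintype n] (A : Matrix m n ℝ) (B : Matrix n p ℝ),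
      (A * B).map Complex.ofReal = A.map Complex.ofReal * B.map Complex.ofReal := by
    intro m n p _ A B
    ext i j
    simp [Matrix.mul_apply, Matrix.map_apply]
  have h1 : ucᵀ * uc = 1 := by
    have := congrArg (fun M => M.map Complex.ofReal) hu_orth
    simp only [hmapmul] at this
    rw [huc, ← Matrix.transpose_map]
    rw [this]
    ext i j
    simp [Matrix.one_apply, Matrix.map_apply]
    split <;> simp
  have h2 : ucᵀ * Jc * uc = 0 := by
    have := congrArg (fun M => M.map Complex.ofReal) hu_lag
    simp only [hmapmul] at this
    rw [huc, hJc, ← Matrix.transpose_map, this]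
    ext i j; simp [Matrix.map_apply]
  have hJt : Jcᵀ = -Jc := by
    rw [hJc, ← Matrix.transpose_map]
    rw [Matrix.J_transpose]
    ext i j; simp [Matrix.map_apply]
  have hJ2 : Jc * Jc = -1 := by
    rw [hJc, ← hmapmul, Matrix.J_squared]
    ext i j
    simp [Matrix.one_apply, Matrix.map_apply]
    split <;> simp
  -- the combined frame is orthogonal
  have hMtM : (fromCols uc (Jc * uc))ᵀ * fromCols uc (Jc * uc) = 1 := by
    rw [transpose_fromCols, fromRows_mul_fromCols]
    have b11 : ucᵀ * uc = 1 := h1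
    have b12 : ucᵀ * (Jc * uc) = 0 := by rw [← Matrix.mul_assoc]; exact h2
    have b21 : (Jc * uc)ᵀ * uc = 0 := by
      rw [Matrix.transpose_mul, hJt, Matrix.mul_neg, Matrix.neg_mul, h2, neg_zero]
    have b22 : (Jc * uc)ᵀ * (Jc * uc) = 1 := by
      rw [Matrix.transpose_mul, hJt]
      calc ucᵀ * -Jc * (Jc * uc) = ucᵀ * -(Jc * Jc) * uc := by
            simp only [Matrix.mul_neg, Matrix.neg_mul, Matrix.mul_assoc]
        _ = 1 := by rw [hJ2, neg_neg, Matrix.mul_one, h1]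
    rw [b11, b12, b21, b22, Matrix.fromBlocks_one]
  have hMMt : fromCols uc (Jc * uc) * (fromCols uc (Jc * uc))ᵀ = 1 :=
    mul_eq_one_comm.mp hMtM
  have hkey : uc * ucᵀ + Jc * (uc * ucᵀ) * Jcᵀ = 1 := by
    rw [transpose_fromCols, fromCols_mul_fromRows] at hMMt
    rw [← hMMt, Matrix.transpose_mul]
    simp only [Matrix.mul_assoc]
  -- eigenvector facts
  have hvkc : Jc *ᵥ star vk = (-(Complex.I * σ)) • star vk := by
    have := congrArg star hvk
    rw [funext_iff] at this ⊢
    intro i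
    have hi := this i
    simp only [Pi.smul_apply, Pi.star_apply, star_smul, smul_eq_mul] at hi ⊢
    have lhs : (Jc *ᵥ star vk) i = star ((Jc *ᵥ vk) i) := by
      simp only [Matrix.mulVec, dotProduct, Pi.star_apply, hJc, Matrix.map_apply,
        star_sum, star_mul']
      refine Finset.sum_congr rfl fun j _ => ?_
      rw [Complex.star_def, Complex.conj_ofReal]
    rw [lhs, hi]
    simp only [star_mul', Complex.star_def, Complex.conj_ofReal, Complex.conj_I]
    ring
  -- rewrite the sum as a quadratic form
  set S : ℂ := star vk ⬝ᵥ ((uc * ucᵀ) *ᵥ vl) with hS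
  have hsum : ∑ q : Fin L,
        (star vk ⬝ᵥ fun i => (u i q : ℂ)) * ((fun i => ((u i q : ℝ) : ℂ)) ⬝ᵥ vl) = S := by
    rw [hS]
    have e1 : ∀ q : Fin L, (star vk ⬝ᵥ fun i => ((u i q : ℝ) : ℂ)) = (star vk ᵥ* uc) q := by
      intro q
      simp [Matrix.vecMul, dotProduct, huc, Matrix.map_apply]
    have e2 : ∀ q : Fin L, ((fun i => ((u i q : ℝ) : ℂ)) ⬝ᵥ vl) = (ucᵀ *ᵥ vl) q := by
      intro q
      simp [Matrix.mulVec, dotProduct, huc, Matrix.map_apply, Matrix.transpose_apply]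
    calc ∑ q : Fin L, (star vk ⬝ᵥ fun i => ((u i q : ℝ) : ℂ)) * ((fun i => ((u i q : ℝ) : ℂ)) ⬝ᵥ vl)
        = ∑ q : Fin L, (star vk ᵥ* uc) q * (ucᵀ *ᵥ vl) q := by
          refine Finset.sum_congr rfl fun q _ => ?_
          rw [e1 q, e2 q]
      _ = (star vk ᵥ* uc) ⬝ᵥ (ucᵀ *ᵥ vl) := rfl
      _ = star vk ⬝ᵥ ((uc * ucᵀ) *ᵥ vl) := by
          rw [← Matrix.dotProduct_mulVec, Matrix.mulVec_mulVec]
  -- main computation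
  have hT : star vk ⬝ᵥ ((Jc * (uc * ucᵀ) * Jcᵀ) *ᵥ vl) = S := by
    have hJtvl : Jcᵀ *ᵥ vl = (-(Complex.I * σ)) • vl := by
      rw [hJt, Matrix.neg_mulVec, hvl, ← neg_smul]
    rw [Matrix.mul_assoc, ← Matrix.mulVec_mulVec, ← Matrix.mulVec_mulVec, hJtvl,
      Matrix.mulVec_smul, Matrix.mulVec_smul, dotProduct_smul]
    rw [Matrix.dotProduct_mulVec, ← Matrix.mulVec_transpose, hJt, Matrix.neg_mulVec, hvkc]
    rw [show -(-(Complex.I * (σ : ℂ)) • star vk) = (Complex.I * (σ : ℂ)) • star vk from by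
          rw [neg_smul, neg_neg],
        smul_dotProduct, smul_smul, smul_eq_mul, ← hS]
    have hσ2 : -(Complex.I * σ) * (Complex.I * σ) = 1 := by
      have h2σ : (σ : ℂ) * σ = 1 := by rcases hσ with h | h <;> norm_num [h]
      calc -(Complex.I * σ) * (Complex.I * σ) = -(Complex.I * Complex.I) * ((σ : ℂ) * σ) := by
            ring
        _ = 1 := by rw [Complex.I_mul_I, h2σ]; ring
    rw [hσ2, one_mul]
  have hSid : S = star vk ⬝ᵥ vl - S := by
    have := congrArg (fun M => star vk ⬝ᵥ (M *ᵥ vl)) hkey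
    simp only [Matrix.add_mulVec, dotProduct_add, Matrix.one_mulVec, hT] at this
    rw [hS] at this ⊢
    linear_combination this
  rw [horth] at hSid
  rw [hsum]
  linear_combination hSid / 2
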